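/- Let K_{3,3} be the complete bipartite graph on vertices {v_1,...,v_6} with edges {v_i, v_j} for i ∈ {1,2,3}, j ∈ {4,5,6}. Then I_{K_{3,3}} equals the radical of the ideal generated by the seven polynomials x_{14}x_{26} − x_{16}x_{24} + x_{15}x_{36} − x_{16}x_{35}, x_{25}x_{36} − x_{26}x_{35} + x_{14}x_{25} − x_{15}x_{24}, x_{24}x_{36} − x_{26}x_{34}, x_{15}x_{26} − x_{16}x_{25}, x_{24}x_{35} − x_{25}x_{34}, x_{14}x_{36} − x_{16}x_{34}, x_{14}x_{35} − x_{15}x_{34}. In particular ara(I_{K_{3,3}}) ≤ 7. -/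

import Mathlib

open MvPolynomial

noncomputable section

/-- The toric map of the complete bipartite graph `K_{3,3}`: the variable `x (i, j)`
(corresponding to the edge `{v_{i+1}, v_{j+4}}`) is sent to `t_{i+1} * t_{j+4}`, where the
six vertices are modelled by `Fin 3 ⊕ Fin 3`. -/
def toricMapK33 (K : Type*) [CommRing K] :
    MvPolynomial (Fin 3 × Fin 3) K →ₐ[K] MvPolynomial (Fin 3 ⊕ Fin 3) K :=
  aeval fun p => X (Sum.inl p.1) * X (Sum.inr p.2)

/-- The toric ideal `I_{K_{3,3}}` of the complete bipartite graph `K_{3,3}`. -/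
def toricIdealK33 (K : Type*) [CommRing K] : Ideal (MvPolynomial (Fin 3 × Fin 3) K) :=
  RingHom.ker (toricMapK33 K)

/-- The arithmetical rank of an ideal: the least `s` such that there are `s` elements of
`I` generating `I` up to radical. -/
def ara {R : Type*} [CommRing R] (I : Ideal R) : ℕ :=
  sInf {s | ∃ F : Fin s → R, (∀ i, F i ∈ I) ∧ (Ideal.span (Set.range F)).radical = I}

section Aux

variable {K : Type*} [Field K]

/-- Evaluating the toric map at a point. -/
lemma eval_toricMapK33 (v : Fin 3 ⊕ Fin 3 → K) (f : MvPolynomial (Fin 3 × Fin 3) K) :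
    eval v (toricMapK33 K f) = eval (fun p : Fin 3 × Fin 3 => v (Sum.inl p.1) * v (Sum.inr p.2)) f := by
  have h : (eval v).comp (toricMapK33 K : MvPolynomial (Fin 3 × Fin 3) K →+* MvPolynomial (Fin 3 ⊕ Fin 3) K)
      = eval (fun p : Fin 3 × Fin 3 => v (Sum.inl p.1) * v (Sum.inr p.2)) := by
    apply MvPolynomial.ringHom_ext
    · intro a
      simp [toricMapK33]
    · intro p
      simp [toricMapK33]
  exact DFunLike.congr_fun h f

/-- A `3 × 3` matrix all of whose `2 × 2` minors vanish has rank one. -/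
lemma rankOne (x : Fin 3 × Fin 3 → K)
    (h : ∀ i j k l : Fin 3, x (i, j) * x (k, l) = x (i, l) * x (k, j)) :
    ∃ t s : Fin 3 → K, ∀ p : Fin 3 × Fin 3, x p = t p.1 * s p.2 := by
  by_cases hz : ∀ p, x p = 0
  · exact ⟨0, 0, fun p => by simp [hz p]⟩
  · push_neg at hz
    obtain ⟨⟨a, b⟩, hab⟩ := hz
    refine ⟨fun i => x (i, b), fun j => x (a, j) / x (a, b), ?_⟩
    rintro ⟨i, j⟩
    field_simp
    linear_combination h i j a b

end Aux

set_option maxHeartbeats 2000000 in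
/-- The toric ideal of `K_{3,3}` is the radical of an ideal generated by
seven explicit polynomials (writing `x (a, b)` for the variable `x_{(a+1)(b+4)}` attached
to the edge `{v_{a+1}, v_{b+4}}`); in particular `ara (I_{K_{3,3}}) ≤ 7`. -/
theorem toricIdealK33_eq_radical_of_seven {K : Type*} [Field K] [IsAlgClosed K] :
    (Ideal.span {
      X (0, 0) * X (1, 2) - X (0, 2) * X (1, 0) + X (0, 1) * X (2, 2) - X (0, 2) * X (2, 1),
      X (1, 1) * X (2, 2) - X (1, 2) * X (2, 1) + X (0, 0) * X (1, 1) - X (0, 1) * X (1, 0),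
      X (1, 0) * X (2, 2) - X (1, 2) * X (2, 0),
      X (0, 1) * X (1, 2) - X (0, 2) * X (1, 1),
      X (1, 0) * X (2, 1) - X (1, 1) * X (2, 0),
      X (0, 0) * X (2, 2) - X (0, 2) * X (2, 0),
      (X (0, 0) * X (2, 1) - X (0, 1) * X (2, 0) : MvPolynomial (Fin 3 × Fin 3) K)}).radical
      = toricIdealK33 K ∧
    ara (toricIdealK33 K) ≤ 7 := by
  classical
  set g1 : MvPolynomial (Fin 3 × Fin 3) K :=
    X (0, 0) * X (1, 2) - X (0, 2) * X (1, 0) + X (0, 1) * X (2, 2) - X (0, 2) * X (2, 1) with hg1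
  set g2 : MvPolynomial (Fin 3 × Fin 3) K :=
    X (1, 1) * X (2, 2) - X (1, 2) * X (2, 1) + X (0, 0) * X (1, 1) - X (0, 1) * X (1, 0) with hg2
  set g3 : MvPolynomial (Fin 3 × Fin 3) K := X (1, 0) * X (2, 2) - X (1, 2) * X (2, 0) with hg3
  set g4 : MvPolynomial (Fin 3 × Fin 3) K := X (0, 1) * X (1, 2) - X (0, 2) * X (1, 1) with hg4
  set g5 : MvPolynomial (Fin 3 × Fin 3) K := X (1, 0) * X (2, 1) - X (1, 1) * X (2, 0) with hg5
  set g6 : MvPolynomial (Fin 3 × Fin 3) K := X (0, 0) * X (2, 2) - X (0, 2) * X (2, 0) with hg6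
  set g7 : MvPolynomial (Fin 3 × Fin 3) K := X (0, 0) * X (2, 1) - X (0, 1) * X (2, 0) with hg7
  set Jset : Set (MvPolynomial (Fin 3 × Fin 3) K) := {g1, g2, g3, g4, g5, g6, g7} with hJset
  set J : Ideal (MvPolynomial (Fin 3 × Fin 3) K) := Ideal.span Jset with hJ
  set S : Set (Fin 3 × Fin 3 → K) :=
    {x | ∃ t s : Fin 3 → K, ∀ p : Fin 3 × Fin 3, x p = t p.1 * s p.2} with hS
  -- the zero locus of the seven polynomials is the Segre variety
  have hZ : MvPolynomial.zeroLocus K J = S := by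
    apply le_antisymm
    · intro x hx
      have hmem : ∀ g ∈ Jset, eval x g = 0 := fun g hg => by
        have := hx g (Ideal.subset_span hg); exact this
      have eq1 := hmem g1 (by simp [hJset])
      have eq2 := hmem g2 (by simp [hJset])
      have eq3 := hmem g3 (by simp [hJset])
      have eq4 := hmem g4 (by simp [hJset])
      have eq5 := hmem g5 (by simp [hJset])
      have eq6 := hmem g6 (by simp [hJset])
      have eq7 := hmem g7 (by simp [hJset])
      rw [hg1] at eq1; rw [hg2] at eq2; rw [hg3] at eq3; rw [hg4] at eq4
      rw [hg5] at eq5; rw [hg6] at eq6; rw [hg7] at eq7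
      simp only [map_sub, map_add, map_mul, eval_X] at eq1 eq2 eq3 eq4 eq5 eq6 eq7
      -- the product of the two "missing" minors in the first binomial lies in the span
      have hm12 : (x (0,0) * x (1,2) - x (0,2) * x (1,0)) *
          (x (0,1) * x (2,2) - x (0,2) * x (2,1)) = 0 := by
        linear_combination (-(x (0,1) * x (0,2))) * eq3
          + (x (0,0) * x (2,2) - 2 * x (0,2) * x (2,0)) * eq4
          + (x (0,2))^2 * eq5 + x (0,2) * x (1,1) * eq6 + (-(x (0,2) * x (1,2))) * eq7
      have hm34 : (x (1,1) * x (2,2) - x (1,2) * x (2,1)) *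
          (x (0,0) * x (1,1) - x (0,1) * x (1,0)) = 0 := by
        linear_combination (-(x (0,1) * x (1,1))) * eq3 + (-(x (1,1) * x (2,0))) * eq4
          + x (0,1) * x (1,2) * eq5 + (x (1,1))^2 * eq6 + (-(x (1,1) * x (1,2))) * eq7
      have q1 : x (0,0) * x (1,2) - x (0,2) * x (1,0) = 0 := by
        have hsq : (x (0,0) * x (1,2) - x (0,2) * x (1,0)) ^ 2 = 0 := by
          linear_combination (x (0,0) * x (1,2) - x (0,2) * x (1,0)) * eq1 - hm12
        exact pow_eq_zero_iff two_ne_zero |>.1 hsq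
      have q2 : x (0,1) * x (2,2) - x (0,2) * x (2,1) = 0 := by linear_combination eq1 - q1
      have q3 : x (1,1) * x (2,2) - x (1,2) * x (2,1) = 0 := by
        have hsq : (x (1,1) * x (2,2) - x (1,2) * x (2,1)) ^ 2 = 0 := by
          linear_combination (x (1,1) * x (2,2) - x (1,2) * x (2,1)) * eq2 - hm34
        exact pow_eq_zero_iff two_ne_zero |>.1 hsq
      have q4 : x (0,0) * x (1,1) - x (0,1) * x (1,0) = 0 := by linear_combination eq2 - q3
      -- now all nine 2×2 minors vanish
      have fin3 : ∀ m : Fin 3, m = 0 ∨ m = 1 ∨ m = 2 := by decide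
      have key : ∀ i j k l : Fin 3, x (i, j) * x (k, l) = x (i, l) * x (k, j) := by
        intro i j k l
        rcases fin3 i with rfl | rfl | rfl <;> rcases fin3 j with rfl | rfl | rfl <;>
          rcases fin3 k with rfl | rfl | rfl <;> rcases fin3 l with rfl | rfl | rfl <;>
          first
            | ring1
            | linear_combination q1 | linear_combination -q1
            | linear_combination q2 | linear_combination -q2
            | linear_combination q3 | linear_combination -q3
            | linear_combination q4 | linear_combination -q4
            | linear_combination eq3 | linear_combination -eq3
            | linear_combination eq4 | linear_combination -eq4
            | linear_combination eq5 | linear_combination -eq5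
            | linear_combination eq6 | linear_combination -eq6
            | linear_combination eq7 | linear_combination -eq7
      exact rankOne x key
    · intro x hx
      obtain ⟨t, s, hts⟩ := hx
      intro p hp
      have hle : J ≤ MvPolynomial.vanishingIdeal K ({x} : Set (Fin 3 × Fin 3 → K)) := by
        rw [hJ, Ideal.span_le]
        intro g hg
        rw [SetLike.mem_coe, MvPolynomial.mem_vanishingIdeal_iff]
        rintro y rfl
        simp only [hJset, Set.mem_insert_iff, Set.mem_singleton_iff] at hg
        rcases hg with rfl | rfl | rfl | rfl | rfl | rfl | rfl <;>
          · simp only [aeval_X, hg1, hg2, hg3, hg4, hg5, hg6, hg7, map_sub, map_add, map_mul, eval_X, hts]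
            ring
      exact hle hp x rfl
  -- the vanishing ideal of the Segre variety is the toric ideal
  have hV : MvPolynomial.vanishingIdeal K S = toricIdealK33 K := by
    ext f
    rw [MvPolynomial.mem_vanishingIdeal_iff]
    unfold toricIdealK33
    rw [RingHom.mem_ker]
    constructor
    · intro hf
      apply MvPolynomial.funext (q := 0)
      intro v
      rw [map_zero, eval_toricMapK33]
      exact hf _ ⟨fun i => v (Sum.inl i), fun j => v (Sum.inr j), fun p => rfl⟩
    · intro hf x hx
      obtain ⟨t, s, hts⟩ := hx
      have hx' : x = fun p : Fin 3 × Fin 3 => (Sum.elim t s) (Sum.inl p.1) * (Sum.elim t s) (Sum.inr p.2) := by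
        funext p; exact hts p
      change eval x f = 0
      rw [hx', ← eval_toricMapK33 (Sum.elim t s) f, hf, map_zero]
  have hmain : J.radical = toricIdealK33 K := by
    rw [← MvPolynomial.vanishingIdeal_zeroLocus_eq_radical (K := K), hZ, hV]
  refine ⟨hmain, ?_⟩
  -- the arithmetical rank bound
  apply Nat.sInf_le
  refine ⟨![g1, g2, g3, g4, g5, g6, g7], ?_, ?_⟩
  · intro i
    rw [← hmain]
    apply Ideal.le_radical
    apply Ideal.subset_span
    rw [hJset]
    fin_cases i
    · exact Set.mem_insert _ _
    · exact Set.mem_insert_of_mem _ (Set.mem_insert _ _)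
    · exact Set.mem_insert_of_mem _ (Set.mem_insert_of_mem _ (Set.mem_insert _ _))
    · exact Set.mem_insert_of_mem _ (Set.mem_insert_of_mem _ (Set.mem_insert_of_mem _
        (Set.mem_insert _ _)))
    · exact Set.mem_insert_of_mem _ (Set.mem_insert_of_mem _ (Set.mem_insert_of_mem _
        (Set.mem_insert_of_mem _ (Set.mem_insert _ _))))
    · exact Set.mem_insert_of_mem _ (Set.mem_insert_of_mem _ (Set.mem_insert_of_mem _
        (Set.mem_insert_of_mem _ (Set.mem_insert_of_mem _ (Set.mem_insert _ _)))))
    · exact Set.mem_insert_of_mem _ (Set.mem_insert_of_mem _ (Set.mem_insert_of_mem _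
        (Set.mem_insert_of_mem _ (Set.mem_insert_of_mem _ (Set.mem_insert_of_mem _
          (Set.mem_singleton _))))))
  · have hrange : Set.range ![g1, g2, g3, g4, g5, g6, g7] = Jset := by
      ext y
      simp only [hJset, Matrix.range_cons, Matrix.range_empty, Set.singleton_union,
        Set.union_empty, Set.mem_insert_iff, Set.mem_singleton_iff, Set.mem_union,
        Set.mem_empty_iff_false, or_false]
    rw [hrange, ← hJ, hmain]
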